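/- For all integers n ≥ k ≥ 0 and r ≥ 0, the noncommutative partial r-Bell polynomial B^r_{n+r,k+r} ∈ A equals the sum, over all bicolored set partitions π ∈ S^r_{n+r,k+r}, of the ordered product x_{|B_1|} x_{|B_2|} ⋯ x_{|B_{k+r}|}, where B_1, …, B_{k+r} are the blocks of π listed in increasing order of their minimal elements, and where x_{|B_i|} = a_{|B_i|} if B_i is colored 1 and x_{|B_i|} = b_{|B_i|} if B_i is colored 2. -/

import Mathlib

/-- coefficientwise extension of a map on coefficients to `A[t]` (i.e. `D` with `D t = 0`) -/
noncomputable def polyLift {A : Type*} [Semiring A] (D : A → A) (p : Polynomial A) : Polynomial A :=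
  p.sum fun i c => Polynomial.C (D c) * Polynomial.X ^ i

/-- the map `E : A[t] → A[t]`, `E(p) = p·(t b_1) + D(p)` -/
noncomputable def EOpNC {A : Type*} [Ring A] (D : A → A) (b1 : A) (p : Polynomial A) : Polynomial A :=
  p * (Polynomial.C b1 * Polynomial.X) + polyLift D p

/-- the noncommutative partial `r`-Bell polynomial `B^r_{n+r,k+r}`: the coefficient of
`t^k` in `E^n(a_1^r)` -/
noncomputable def rBellNC {A : Type*} [Ring A] (D : A → A) (a1 b1 : A) (n k r : ℕ) : A :=
  ((EOpNC D b1)^[n] (Polynomial.C (a1 ^ r))).coeff k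

/-- `IsBSP N k r π` : `π` is a bicolored set partition of `{0,…,N-1}` (representing
`{1,…,N}`) into `k + r` pairwise disjoint nonempty blocks, each block carrying a color
(`true` = color 1, `false` = color 2), such that the blocks colored 1 are exactly the
blocks containing one of the first `r` elements and the first `r` elements lie in `r`
distinct blocks (so exactly `r` blocks are colored 1 and `k` blocks are colored 2).
For `N = n + r` this is membership in `S^r_{n+r,k+r}`. -/
def IsBSP (N k r : ℕ) (π : Finset (Finset (Fin N) × Bool)) : Prop :=
  π.card = k + r ∧
  (∀ p ∈ π, p.1.Nonempty) ∧
  (∀ p ∈ π, ∀ q ∈ π, p ≠ q → Disjoint p.1 q.1) ∧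
  (∀ x : Fin N, ∃ p ∈ π, x ∈ p.1) ∧
  (∀ p ∈ π, (p.2 = true ↔ ∃ i ∈ p.1, (i : ℕ) < r)) ∧
  (∀ p ∈ π, ∀ i ∈ p.1, ∀ j ∈ p.1, (i : ℕ) < r → (j : ℕ) < r → i = j)

set_option synthInstance.maxSize 2000 in
instance (N k r : ℕ) : DecidablePred (IsBSP N k r) := fun π => by
  unfold IsBSP; infer_instance

/-- The ordered product `x_{|B_1|} ⋯ x_{|B_{k+r}|}` over the blocks of `π` listed in
increasing order of their minimal elements: we run through `i = 0,…,N-1` in increasing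
order, and when `i` is the minimal element of a block `B` of `π` we pick up the factor
`a_{|B|}` (if `B` is colored 1) or `b_{|B|}` (if `B` is colored 2), and otherwise
the factor `1`. -/
noncomputable def orderedBlockProd {A : Type*} [Ring A] (a b : ℕ → A) {N : ℕ}
    (π : Finset (Finset (Fin N) × Bool)) : A :=
  ((List.finRange N).map (fun i =>
    if h : ∃ p ∈ π, i ∈ p.1 ∧ ∀ j ∈ p.1, i ≤ j then
      (if h.choose.2 then a h.choose.1.card else b h.choose.1.card)
    else 1)).prod

namespace S3

open Finset

variable {N : ℕ}

def ecs (N : ℕ) : Fin N ↪ Fin (N + 1) := ⟨Fin.castSucc, Fin.castSucc_injective N⟩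

@[simp] lemma ecs_apply (i : Fin N) : ecs N i = i.castSucc := rfl

def fdown (s : Finset (Fin (N + 1))) : Finset (Fin N) :=
  Finset.univ.filter (fun i => i.castSucc ∈ s)

@[simp] lemma mem_fdown {s : Finset (Fin (N + 1))} {i : Fin N} :
    i ∈ fdown s ↔ i.castSucc ∈ s := by simp [fdown]

@[simp] lemma mem_map_ecs {s : Finset (Fin N)} {x : Fin (N + 1)} :
    x ∈ s.map (ecs N) ↔ ∃ y ∈ s, y.castSucc = x := by simp [Finset.mem_map]

lemma last_not_mem_map (s : Finset (Fin N)) : Fin.last N ∉ s.map (ecs N) := by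
  simp only [mem_map_ecs, not_exists]
  rintro y hy
  exact absurd hy.2 (Fin.castSucc_lt_last y).ne

@[simp] lemma fdown_map (s : Finset (Fin N)) : fdown (s.map (ecs N)) = s := by
  ext i
  simp only [mem_fdown, mem_map_ecs]
  constructor
  · rintro ⟨y, hy, h⟩
    rwa [← Fin.castSucc_injective N h]
  · exact fun h => ⟨i, h, rfl⟩

@[simp] lemma fdown_insert_last (s : Finset (Fin (N + 1))) :
    fdown (insert (Fin.last N) s) = fdown s := by
  ext i
  simp only [mem_fdown, Finset.mem_insert]
  refine ⟨fun h => h.resolve_left (fun h' => absurd h' (Fin.castSucc_lt_last i).ne), Or.inr⟩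

lemma map_fdown {s : Finset (Fin (N + 1))} (h : Fin.last N ∉ s) :
    (fdown s).map (ecs N) = s := by
  ext x
  simp only [mem_map_ecs, mem_fdown]
  constructor
  · rintro ⟨y, hy, rfl⟩; exact hy
  · intro hx
    have hne : x ≠ Fin.last N := fun h' => h (h' ▸ hx)
    obtain ⟨y, rfl⟩ := Fin.eq_castSucc_of_ne_last hne
    exact ⟨y, hx, rfl⟩

lemma insert_last_map_fdown {s : Finset (Fin (N + 1))} (h : Fin.last N ∈ s) :
    insert (Fin.last N) ((fdown s).map (ecs N)) = s := by
  ext x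
  simp only [Finset.mem_insert, mem_map_ecs, mem_fdown]
  constructor
  · rintro (rfl | ⟨y, hy, rfl⟩)
    · exact h
    · exact hy
  · intro hx
    rcases eq_or_ne x (Fin.last N) with rfl | hne
    · exact Or.inl rfl
    · obtain ⟨y, rfl⟩ := Fin.eq_castSucc_of_ne_last hne
      exact Or.inr ⟨y, hx, rfl⟩

def bUp (q : Finset (Fin N) × Bool) : Finset (Fin (N + 1)) × Bool := (q.1.map (ecs N), q.2)

def bDown (q : Finset (Fin (N + 1)) × Bool) : Finset (Fin N) × Bool := (fdown q.1, q.2)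

lemma bUp_inj : Function.Injective (bUp (N := N)) := by
  rintro ⟨s, c⟩ ⟨t, d⟩ h
  simp only [bUp, Prod.mk.injEq] at h
  exact Prod.ext (Finset.map_injective _ h.1) h.2

@[simp] lemma bDown_bUp (q : Finset (Fin N) × Bool) : bDown (bUp q) = q := by
  simp [bDown, bUp]

lemma bUp_bDown {q : Finset (Fin (N + 1)) × Bool} (h : Fin.last N ∉ q.1) :
    bUp (bDown q) = q := by
  simp [bDown, bUp, map_fdown h]

def insNew (π : Finset (Finset (Fin N) × Bool)) : Finset (Finset (Fin (N + 1)) × Bool) :=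
  insert ({Fin.last N}, false) (π.image bUp)

def insInto (π : Finset (Finset (Fin N) × Bool)) (p : Finset (Fin N) × Bool) :
    Finset (Finset (Fin (N + 1)) × Bool) :=
  insert (insert (Fin.last N) (p.1.map (ecs N)), p.2) ((π.erase p).image bUp)

def remNew (π' : Finset (Finset (Fin (N + 1)) × Bool)) : Finset (Finset (Fin N) × Bool) :=
  (π'.erase ({Fin.last N}, false)).image bDown

-- counting lemmas
lemma card_small {r : ℕ} (hrN : r ≤ N) :
    ((univ : Finset (Fin N)).filter (fun i : Fin N => (i : ℕ) < r)).card = r := by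
  have : (univ : Finset (Fin N)).filter (fun i : Fin N => (i : ℕ) < r)
      = (univ : Finset (Fin r)).map (Fin.castLEEmb hrN) := by
    ext x
    simp only [mem_filter, mem_univ, true_and, Finset.mem_map]
    constructor
    · intro hx
      refine ⟨⟨(x : ℕ), hx⟩, ?_⟩
      apply Fin.ext; simp
    · rintro ⟨y, rfl⟩
      simpa using y.2
  rw [this, Finset.card_map, Finset.card_univ, Fintype.card_fin]

lemma card_true {k r : ℕ} {π : Finset (Finset (Fin N) × Bool)}
    (h : IsBSP N k r π) (hrN : r ≤ N) :
    (π.filter (fun p => p.2 = true)).card = r := by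
  classical
  obtain ⟨hcard, hne, hdis, hcov, hcol, huniq⟩ := h
  rw [← card_small hrN]
  have hex : ∀ p ∈ π.filter (fun p => p.2 = true), ∃! x, x ∈ p.1 ∧ (x : ℕ) < r := by
    intro p hp
    rw [mem_filter] at hp
    obtain ⟨i, hi, hir⟩ := (hcol p hp.1).1 hp.2
    exact ⟨i, ⟨hi, hir⟩, fun y hy => huniq p hp.1 y hy.1 i hi hy.2 hir⟩
  apply Finset.card_bij (fun p hp => Finset.choose _ p.1 (hex p hp))
  · intro p hp
    have := Finset.choose_property (fun x : Fin N => (x : ℕ) < r) p.1 (hex p hp)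
    simp only [mem_filter, mem_univ, true_and]
    exact this
  · intro p hp q hq heq
    have h1 := Finset.choose_mem (fun x : Fin N => (x : ℕ) < r) p.1 (hex p hp)
    have h2 := Finset.choose_mem (fun x : Fin N => (x : ℕ) < r) q.1 (hex q hq)
    rw [mem_filter] at hp hq
    by_contra hne'
    exact (Finset.disjoint_left.1 (hdis p hp.1 q hq.1 hne') h1) (heq ▸ h2)
  · intro x hx
    rw [mem_filter] at hx
    obtain ⟨p, hp, hxp⟩ := hcov x
    have hpt : p.2 = true := (hcol p hp).2 ⟨x, hxp, hx.2⟩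
    have hpf : p ∈ π.filter (fun p => p.2 = true) := mem_filter.2 ⟨hp, hpt⟩
    refine ⟨p, hpf, ?_⟩
    have h1 := Finset.choose_mem (fun x : Fin N => (x : ℕ) < r) p.1 (hex p hpf)
    have h2 := Finset.choose_property (fun x : Fin N => (x : ℕ) < r) p.1 (hex p hpf)
    exact huniq p hp _ h1 x hxp h2 hx.2

lemma card_false {k r : ℕ} {π : Finset (Finset (Fin N) × Bool)}
    (h : IsBSP N k r π) (hrN : r ≤ N) :
    (π.filter (fun p => p.2 = false)).card = k := by
  classical
  have h1 := card_true h hrN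
  have h2 := Finset.card_filter_add_card_filter_not
    (s := π) (p := fun p => p.2 = true)
  have h3 : π.filter (fun p => ¬ p.2 = true) = π.filter (fun p => p.2 = false) := by
    apply Finset.filter_congr
    intro p _
    simp [Bool.not_eq_true]
  rw [h1, h3] at h2
  have := h.1
  omega


lemma mem_insNew {π : Finset (Finset (Fin N) × Bool)} {x} :
    x ∈ insNew π ↔ x = ({Fin.last N}, false) ∨ ∃ q ∈ π, bUp q = x := by
  simp [insNew, Finset.mem_insert, Finset.mem_image]

lemma mem_insInto {π : Finset (Finset (Fin N) × Bool)} {p x} :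
    x ∈ insInto π p ↔
      x = (insert (Fin.last N) (p.1.map (ecs N)), p.2) ∨ ∃ q ∈ π.erase p, bUp q = x := by
  simp [insInto, Finset.mem_insert, Finset.mem_image]

lemma new_not_mem_image {π : Finset (Finset (Fin N) × Bool)}
    (hne : ∀ p ∈ π, p.1.Nonempty) : ({Fin.last N}, false) ∉ π.image bUp := by
  intro hmem
  obtain ⟨q, hq, heq⟩ := Finset.mem_image.1 hmem
  obtain ⟨y, hy⟩ := hne q hq
  have h1 : y.castSucc ∈ (({Fin.last N}, false) : Finset (Fin (N + 1)) × Bool).1 := by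
    rw [← heq]
    exact mem_map_ecs.2 ⟨y, hy, rfl⟩
  exact (Fin.castSucc_lt_last y).ne (Finset.mem_singleton.1 h1)

lemma bDown_injOn {π' : Finset (Finset (Fin (N + 1)) × Bool)}
    (hne : ∀ p ∈ π', p.1.Nonempty)
    (hdis : ∀ p ∈ π', ∀ q ∈ π', p ≠ q → Disjoint p.1 q.1) :
    Set.InjOn bDown (π' : Set (Finset (Fin (N + 1)) × Bool)) := by
  intro q1 h1 q2 h2 heq
  rw [Finset.mem_coe] at h1 h2
  by_contra hne'
  have hd := hdis q1 h1 q2 h2 hne'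
  have hf : fdown q1.1 = fdown q2.1 := congrArg Prod.fst heq
  rcases Finset.eq_empty_or_nonempty (fdown q1.1) with hemp | ⟨y, hy⟩
  · have hsing : ∀ q ∈ π', fdown q.1 = ∅ → q.1 = {Fin.last N} := by
      intro q hq hq0
      apply Finset.eq_singleton_iff_nonempty_unique_mem.2
      refine ⟨hne q hq, fun x hx => ?_⟩
      by_contra hxne
      obtain ⟨z, rfl⟩ := Fin.eq_castSucc_of_ne_last hxne
      have : z ∈ fdown q.1 := mem_fdown.2 hx
      rw [hq0] at this
      exact absurd this (Finset.notMem_empty z)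
    have e1 := hsing q1 h1 hemp
    have e2 := hsing q2 h2 (hf ▸ hemp)
    have : Fin.last N ∈ q1.1 := e1 ▸ Finset.mem_singleton_self _
    exact (Finset.disjoint_left.1 hd this) (e2 ▸ Finset.mem_singleton_self _)
  · exact (Finset.disjoint_left.1 hd (mem_fdown.1 hy)) (mem_fdown.1 (hf ▸ hy))

-- IsBSP transfer lemmas
lemma isBSP_insNew {k r : ℕ} {π : Finset (Finset (Fin N) × Bool)}
    (h : IsBSP N k r π) (hrN : r ≤ N) : IsBSP (N + 1) (k + 1) r (insNew π) := by
  obtain ⟨hcard, hne, hdis, hcov, hcol, huniq⟩ := h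
  refine ⟨?_, ?_, ?_, ?_, ?_, ?_⟩
  · rw [insNew, Finset.card_insert_of_notMem (new_not_mem_image hne),
      Finset.card_image_of_injective _ bUp_inj, hcard]
    omega
  · intro p hp
    rcases mem_insNew.1 hp with rfl | ⟨q, hq, rfl⟩
    · exact ⟨Fin.last N, Finset.mem_singleton_self _⟩
    · obtain ⟨y, hy⟩ := hne q hq
      exact ⟨y.castSucc, mem_map_ecs.2 ⟨y, hy, rfl⟩⟩
  · intro p hp q hq hpq
    rcases mem_insNew.1 hp with rfl | ⟨p', hp', rfl⟩
    · rcases mem_insNew.1 hq with rfl | ⟨q', hq', rfl⟩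
      · exact absurd rfl hpq
      · exact Finset.disjoint_singleton_left.2 (last_not_mem_map _)
    · rcases mem_insNew.1 hq with rfl | ⟨q', hq', rfl⟩
      · exact Finset.disjoint_singleton_right.2 (last_not_mem_map _)
      · have hne2 : p' ≠ q' := fun h' => hpq (by rw [h'])
        rw [Finset.disjoint_left]
        intro x hx hx'
        obtain ⟨y, hy, rfl⟩ := mem_map_ecs.1 hx
        obtain ⟨z, hz, hzeq⟩ := mem_map_ecs.1 hx'
        have hzy : z = y := Fin.castSucc_injective N hzeq
        subst hzy
        exact (Finset.disjoint_left.1 (hdis p' hp' q' hq' hne2) hy) hz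
  · intro x
    rcases eq_or_ne x (Fin.last N) with rfl | hx
    · exact ⟨({Fin.last N}, false), Finset.mem_insert_self _ _, Finset.mem_singleton_self _⟩
    · obtain ⟨y, rfl⟩ := Fin.eq_castSucc_of_ne_last hx
      obtain ⟨q, hq, hyq⟩ := hcov y
      exact ⟨bUp q, Finset.mem_insert_of_mem (Finset.mem_image_of_mem _ hq),
        mem_map_ecs.2 ⟨y, hyq, rfl⟩⟩
  · intro p hp
    rcases mem_insNew.1 hp with rfl | ⟨q, hq, rfl⟩
    · constructor
      · intro h'
        exact absurd h' (by simp)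
      · rintro ⟨i, hi, hir⟩
        rw [Finset.mem_singleton] at hi
        subst hi
        rw [Fin.val_last] at hir
        omega
    · show q.2 = true ↔ _
      rw [hcol q hq]
      constructor
      · rintro ⟨i, hi, hir⟩
        exact ⟨i.castSucc, mem_map_ecs.2 ⟨i, hi, rfl⟩, by simpa using hir⟩
      · rintro ⟨j, hj, hjr⟩
        obtain ⟨y, hy, rfl⟩ := mem_map_ecs.1 hj
        exact ⟨y, hy, by simpa using hjr⟩
  · intro p hp i hi j hj hir hjr
    rcases mem_insNew.1 hp with rfl | ⟨q, hq, rfl⟩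
    · rw [Finset.mem_singleton] at hi hj
      rw [hi, hj]
    · obtain ⟨y, hy, rfl⟩ := mem_map_ecs.1 hi
      obtain ⟨z, hz, rfl⟩ := mem_map_ecs.1 hj
      have := huniq q hq y hy z hz (by simpa using hir) (by simpa using hjr)
      rw [this]

lemma isBSP_insInto {k r : ℕ} {π : Finset (Finset (Fin N) × Bool)}
    (h : IsBSP N k r π) (hrN : r ≤ N) {p} (hp : p ∈ π) :
    IsBSP (N + 1) k r (insInto π p) := by
  obtain ⟨hcard, hne, hdis, hdcov, hcol, huniq⟩ := h
  have hq'not : (insert (Fin.last N) (p.1.map (ecs N)), p.2) ∉ (π.erase p).image bUp := by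
    intro hmem
    obtain ⟨q, hq, heq⟩ := Finset.mem_image.1 hmem
    apply last_not_mem_map q.1
    have h1 : q.1.map (ecs N) = insert (Fin.last N) (p.1.map (ecs N)) :=
      congrArg Prod.fst heq
    rw [h1]
    exact Finset.mem_insert_self _ _
  have hdq' : ∀ q ∈ (π.erase p).image bUp,
      Disjoint (insert (Fin.last N) (p.1.map (ecs N))) q.1 := by
    intro q hq
    obtain ⟨q0, hq0, rfl⟩ := Finset.mem_image.1 hq
    obtain ⟨hq0ne, hq0π⟩ := Finset.mem_erase.1 hq0
    rw [Finset.disjoint_left]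
    intro x hx hx'
    rcases Finset.mem_insert.1 hx with rfl | hx2
    · exact last_not_mem_map q0.1 hx'
    · obtain ⟨y, hy, rfl⟩ := mem_map_ecs.1 hx2
      obtain ⟨z, hz, hzeq⟩ := mem_map_ecs.1 hx'
      have hzy : z = y := Fin.castSucc_injective N hzeq
      subst hzy
      exact (Finset.disjoint_left.1 (hdis p hp q0 hq0π (Ne.symm hq0ne)) hy) hz
  refine ⟨?_, ?_, ?_, ?_, ?_, ?_⟩
  · rw [insInto, Finset.card_insert_of_notMem hq'not,
      Finset.card_image_of_injective _ bUp_inj, Finset.card_erase_of_mem hp, hcard]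
    have : 1 ≤ π.card := Finset.card_pos.2 ⟨p, hp⟩
    rw [hcard] at this
    omega
  · intro q hq
    rcases mem_insInto.1 hq with rfl | ⟨q0, hq0, rfl⟩
    · exact ⟨Fin.last N, Finset.mem_insert_self _ _⟩
    · obtain ⟨y, hy⟩ := hne q0 (Finset.mem_erase.1 hq0).2
      exact ⟨y.castSucc, mem_map_ecs.2 ⟨y, hy, rfl⟩⟩
  · intro q hq q2 hq2 hqq
    rcases mem_insInto.1 hq with rfl | ⟨q0, hq0, rfl⟩
    · rcases mem_insInto.1 hq2 with rfl | ⟨q20, hq20, rfl⟩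
      · exact absurd rfl hqq
      · exact hdq' _ (Finset.mem_image_of_mem _ hq20)
    · rcases mem_insInto.1 hq2 with rfl | ⟨q20, hq20, rfl⟩
      · exact (hdq' _ (Finset.mem_image_of_mem _ hq0)).symm
      · have hne2 : q0 ≠ q20 := fun h' => hqq (by rw [h'])
        rw [Finset.disjoint_left]
        intro x hx hx'
        obtain ⟨y, hy, rfl⟩ := mem_map_ecs.1 hx
        obtain ⟨z, hz, hzeq⟩ := mem_map_ecs.1 hx'
        have hzy : z = y := Fin.castSucc_injective N hzeq
        subst hzy
        exact (Finset.disjoint_left.1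
          (hdis q0 (Finset.mem_erase.1 hq0).2 q20 (Finset.mem_erase.1 hq20).2 hne2) hy) hz
  · intro x
    rcases eq_or_ne x (Fin.last N) with rfl | hx
    · exact ⟨_, Finset.mem_insert_self _ _, Finset.mem_insert_self _ _⟩
    · obtain ⟨y, rfl⟩ := Fin.eq_castSucc_of_ne_last hx
      obtain ⟨q, hq, hyq⟩ := hdcov y
      rcases eq_or_ne q p with rfl | hqp
      · exact ⟨_, Finset.mem_insert_self _ _,
          Finset.mem_insert_of_mem (mem_map_ecs.2 ⟨y, hyq, rfl⟩)⟩
      · exact ⟨bUp q,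
          Finset.mem_insert_of_mem (Finset.mem_image_of_mem _ (Finset.mem_erase.2 ⟨hqp, hq⟩)),
          mem_map_ecs.2 ⟨y, hyq, rfl⟩⟩
  · intro q hq
    rcases mem_insInto.1 hq with rfl | ⟨q0, hq0, rfl⟩
    · show p.2 = true ↔ _
      rw [hcol p hp]
      constructor
      · rintro ⟨i, hi, hir⟩
        exact ⟨i.castSucc, Finset.mem_insert_of_mem (mem_map_ecs.2 ⟨i, hi, rfl⟩),
          by simpa using hir⟩
      · rintro ⟨j, hj, hjr⟩
        rcases Finset.mem_insert.1 hj with rfl | hj2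
        · rw [Fin.val_last] at hjr
          omega
        · obtain ⟨y, hy, rfl⟩ := mem_map_ecs.1 hj2
          exact ⟨y, hy, by simpa using hjr⟩
    · show q0.2 = true ↔ _
      rw [hcol q0 (Finset.mem_erase.1 hq0).2]
      constructor
      · rintro ⟨i, hi, hir⟩
        exact ⟨i.castSucc, mem_map_ecs.2 ⟨i, hi, rfl⟩, by simpa using hir⟩
      · rintro ⟨j, hj, hjr⟩
        obtain ⟨y, hy, rfl⟩ := mem_map_ecs.1 hj
        exact ⟨y, hy, by simpa using hjr⟩
  · intro q hq i hi j hj hir hjr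
    rcases mem_insInto.1 hq with rfl | ⟨q0, hq0, rfl⟩
    · have hi2 : i ∈ p.1.map (ecs N) := by
        rcases Finset.mem_insert.1 hi with rfl | h2
        · rw [Fin.val_last] at hir
          omega
        · exact h2
      have hj2 : j ∈ p.1.map (ecs N) := by
        rcases Finset.mem_insert.1 hj with rfl | h2
        · rw [Fin.val_last] at hjr
          omega
        · exact h2
      obtain ⟨y, hy, rfl⟩ := mem_map_ecs.1 hi2
      obtain ⟨z, hz, rfl⟩ := mem_map_ecs.1 hj2
      have := huniq p hp y hy z hz (by simpa using hir) (by simpa using hjr)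
      rw [this]
    · obtain ⟨y, hy, rfl⟩ := mem_map_ecs.1 hi
      obtain ⟨z, hz, rfl⟩ := mem_map_ecs.1 hj
      have := huniq q0 (Finset.mem_erase.1 hq0).2 y hy z hz (by simpa using hir)
        (by simpa using hjr)
      rw [this]

lemma isBSP_remNew {k r : ℕ} {π' : Finset (Finset (Fin (N + 1)) × Bool)}
    (h : IsBSP (N + 1) (k + 1) r π') (hrN : r ≤ N)
    (hl : ({Fin.last N}, false) ∈ π') : IsBSP N k r (remNew π') := by
  obtain ⟨hcard, hne, hdis, hcov, hcol, huniq⟩ := h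
  have hnl : ∀ q ∈ π'.erase ({Fin.last N}, false), Fin.last N ∉ q.1 := by
    intro q hq hlast
    obtain ⟨hqne, hqπ⟩ := Finset.mem_erase.1 hq
    exact (Finset.disjoint_left.1 (hdis q hqπ _ hl hqne) hlast) (Finset.mem_singleton_self _)
  have hinj : Set.InjOn (bDown (N := N)) ↑(π'.erase ({Fin.last N}, false)) := by
    intro q1 h1 q2 h2 heq
    rw [Finset.mem_coe] at h1 h2
    rw [← bUp_bDown (hnl q1 h1), heq, bUp_bDown (hnl q2 h2)]
  refine ⟨?_, ?_, ?_, ?_, ?_, ?_⟩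
  · rw [remNew, Finset.card_image_of_injOn hinj, Finset.card_erase_of_mem hl, hcard]
    omega
  · rintro q hq
    obtain ⟨q0, hq0, rfl⟩ := Finset.mem_image.1 hq
    obtain ⟨x, hx⟩ := hne q0 (Finset.mem_erase.1 hq0).2
    have hxne : x ≠ Fin.last N := fun h' => hnl q0 hq0 (h' ▸ hx)
    obtain ⟨y, rfl⟩ := Fin.eq_castSucc_of_ne_last hxne
    exact ⟨y, mem_fdown.2 hx⟩
  · rintro q hq q2 hq2 hneq
    obtain ⟨q0, hq0, rfl⟩ := Finset.mem_image.1 hq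
    obtain ⟨q20, hq20, rfl⟩ := Finset.mem_image.1 hq2
    have hne2 : q0 ≠ q20 := fun h' => hneq (by rw [h'])
    rw [Finset.disjoint_left]
    intro x hx hx2
    exact (Finset.disjoint_left.1
      (hdis q0 (Finset.mem_erase.1 hq0).2 q20 (Finset.mem_erase.1 hq20).2 hne2)
      (mem_fdown.1 hx)) (mem_fdown.1 hx2)
  · intro y
    obtain ⟨q, hq, hyq⟩ := hcov y.castSucc
    have hqne : q ≠ ({Fin.last N}, false) := by
      rintro rfl
      exact (Fin.castSucc_lt_last y).ne (Finset.mem_singleton.1 hyq)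
    exact ⟨bDown q, Finset.mem_image_of_mem _ (Finset.mem_erase.2 ⟨hqne, hq⟩),
      mem_fdown.2 hyq⟩
  · rintro q hq
    obtain ⟨q0, hq0, rfl⟩ := Finset.mem_image.1 hq
    show q0.2 = true ↔ _
    rw [hcol q0 (Finset.mem_erase.1 hq0).2]
    constructor
    · rintro ⟨i, hi, hir⟩
      have hine : i ≠ Fin.last N := by
        intro h'
        rw [h', Fin.val_last] at hir
        omega
      obtain ⟨y, rfl⟩ := Fin.eq_castSucc_of_ne_last hine
      exact ⟨y, mem_fdown.2 hi, by simpa using hir⟩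
    · rintro ⟨y, hy, hyr⟩
      exact ⟨y.castSucc, mem_fdown.1 hy, by simpa using hyr⟩
  · rintro q hq i hi j hj hir hjr
    obtain ⟨q0, hq0, rfl⟩ := Finset.mem_image.1 hq
    have := huniq q0 (Finset.mem_erase.1 hq0).2 i.castSucc (mem_fdown.1 hi) j.castSucc
      (mem_fdown.1 hj) (by simpa using hir) (by simpa using hjr)
    exact Fin.castSucc_injective N this

lemma isBSP_imgDown {k r : ℕ} {π' : Finset (Finset (Fin (N + 1)) × Bool)}
    (h : IsBSP (N + 1) k r π') (hrN : r ≤ N)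
    (hnot : ({Fin.last N}, false) ∉ π') : IsBSP N k r (π'.image bDown) := by
  obtain ⟨hcard, hne, hdis, hcov, hcol, huniq⟩ := h
  obtain ⟨qb, hqb, hlqb⟩ := hcov (Fin.last N)
  have hnlast : ∀ q ∈ π', q ≠ qb → Fin.last N ∉ q.1 := by
    intro q hq hne' hlast
    exact (Finset.disjoint_left.1 (hdis q hq qb hqb hne') hlast) hlqb
  have hqbex : ∃ y : Fin N, y.castSucc ∈ qb.1 := by
    by_contra hno
    push_neg at hno
    have hsing : qb.1 = {Fin.last N} := by
      apply Finset.eq_singleton_iff_unique_mem.2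
      refine ⟨hlqb, fun x hx => ?_⟩
      by_contra hxne
      obtain ⟨y, rfl⟩ := Fin.eq_castSucc_of_ne_last hxne
      exact (hno y) hx
    have hqb2 : qb.2 = false := by
      rcases Bool.eq_false_or_eq_true qb.2 with ht | hf
      · obtain ⟨i, hi, hir⟩ := (hcol qb hqb).1 ht
        rw [hsing, Finset.mem_singleton] at hi
        rw [hi, Fin.val_last] at hir
        omega
      · exact hf
    have heq : qb = ({Fin.last N}, false) := Prod.ext_iff.2 ⟨hsing, hqb2⟩
    exact hnot (heq ▸ hqb)
  have hinj := bDown_injOn hne hdis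
  refine ⟨?_, ?_, ?_, ?_, ?_, ?_⟩
  · rw [Finset.card_image_of_injOn hinj, hcard]
  · rintro q hq
    obtain ⟨q0, hq0, rfl⟩ := Finset.mem_image.1 hq
    rcases eq_or_ne q0 qb with rfl | hne'
    · obtain ⟨y, hy⟩ := hqbex
      exact ⟨y, mem_fdown.2 hy⟩
    · obtain ⟨x, hx⟩ := hne q0 hq0
      have hxne : x ≠ Fin.last N := fun h' => hnlast q0 hq0 hne' (h' ▸ hx)
      obtain ⟨y, rfl⟩ := Fin.eq_castSucc_of_ne_last hxne
      exact ⟨y, mem_fdown.2 hx⟩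
  · rintro q hq q2 hq2 hneq
    obtain ⟨q0, hq0, rfl⟩ := Finset.mem_image.1 hq
    obtain ⟨q20, hq20, rfl⟩ := Finset.mem_image.1 hq2
    have hne2 : q0 ≠ q20 := fun h' => hneq (by rw [h'])
    rw [Finset.disjoint_left]
    intro x hx hx2
    exact (Finset.disjoint_left.1 (hdis q0 hq0 q20 hq20 hne2)
      (mem_fdown.1 hx)) (mem_fdown.1 hx2)
  · intro y
    obtain ⟨q, hq, hyq⟩ := hcov y.castSucc
    exact ⟨bDown q, Finset.mem_image_of_mem _ hq, mem_fdown.2 hyq⟩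
  · rintro q hq
    obtain ⟨q0, hq0, rfl⟩ := Finset.mem_image.1 hq
    show q0.2 = true ↔ _
    rw [hcol q0 hq0]
    constructor
    · rintro ⟨i, hi, hir⟩
      have hine : i ≠ Fin.last N := by
        intro h'
        rw [h', Fin.val_last] at hir
        omega
      obtain ⟨y, rfl⟩ := Fin.eq_castSucc_of_ne_last hine
      exact ⟨y, mem_fdown.2 hi, by simpa using hir⟩
    · rintro ⟨y, hy, hyr⟩
      exact ⟨y.castSucc, mem_fdown.1 hy, by simpa using hyr⟩
  · rintro q hq i hi j hj hir hjr
    obtain ⟨q0, hq0, rfl⟩ := Finset.mem_image.1 hq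
    have := huniq q0 hq0 i.castSucc (mem_fdown.1 hi) j.castSucc (mem_fdown.1 hj)
      (by simpa using hir) (by simpa using hjr)
    exact Fin.castSucc_injective N this

-- inverse lemmas
lemma insNew_remNew {k r : ℕ} {π' : Finset (Finset (Fin (N + 1)) × Bool)}
    (h : IsBSP (N + 1) (k + 1) r π') (hl : ({Fin.last N}, false) ∈ π') :
    insNew (remNew π') = π' := by
  obtain ⟨hcard, hne, hdis, hcov, hcol, huniq⟩ := h
  have hnl : ∀ q ∈ π'.erase ({Fin.last N}, false), Fin.last N ∉ q.1 := by
    intro q hq hlast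
    obtain ⟨hqne, hqπ⟩ := Finset.mem_erase.1 hq
    exact (Finset.disjoint_left.1 (hdis q hqπ _ hl hqne) hlast) (Finset.mem_singleton_self _)
  have h2 : Set.EqOn (bUp ∘ bDown (N := N)) id ↑(π'.erase ({Fin.last N}, false)) := by
    intro q hq
    exact bUp_bDown (hnl q (Finset.mem_coe.1 hq))
  rw [insNew, remNew, Finset.image_image, Finset.image_congr h2, Finset.image_id,
    Finset.insert_erase hl]

lemma remNew_insNew {k r : ℕ} {π : Finset (Finset (Fin N) × Bool)}
    (h : IsBSP N k r π) : remNew (insNew π) = π := by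
  have h2 : Set.EqOn (bDown ∘ bUp (N := N)) id ↑π := fun q _ => bDown_bUp q
  rw [remNew, insNew, Finset.erase_insert (new_not_mem_image h.2.1), Finset.image_image,
    Finset.image_congr h2, Finset.image_id]

lemma imgDown_insInto {k r : ℕ} {π : Finset (Finset (Fin N) × Bool)}
    (h : IsBSP N k r π) {p} (hp : p ∈ π) :
    (insInto π p).image bDown = π := by
  have h2 : Set.EqOn (bDown ∘ bUp (N := N)) id ↑(π.erase p) := fun q _ => bDown_bUp q
  have h3 : bDown (insert (Fin.last N) (p.1.map (ecs N)), p.2) = p := by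
    rw [bDown]
    simp only [fdown_insert_last, fdown_map]
  rw [insInto, Finset.image_insert, Finset.image_image, Finset.image_congr h2,
    Finset.image_id, h3, Finset.insert_erase hp]

lemma insInto_imgDown {k r : ℕ} {π' : Finset (Finset (Fin (N + 1)) × Bool)}
    (h : IsBSP (N + 1) k r π') (hrN : r ≤ N)
    (hnot : ({Fin.last N}, false) ∉ π') {q} (hq : q ∈ π') (hlq : Fin.last N ∈ q.1) :
    insInto (π'.image bDown) (bDown q) = π' := by
  obtain ⟨hcard, hne, hdis, hcov, hcol, huniq⟩ := h
  have hnlast : ∀ q2 ∈ π', q2 ≠ q → Fin.last N ∉ q2.1 := by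
    intro q2 hq2 hne' hlast
    exact (Finset.disjoint_left.1 (hdis q2 hq2 q hq hne') hlast) hlq
  have hinj := bDown_injOn hne hdis
  have hpair : (insert (Fin.last N) ((bDown q).1.map (ecs N)), (bDown q).2) = q :=
    Prod.ext (insert_last_map_fdown hlq) rfl
  have herase : (π'.image bDown).erase (bDown q) = (π'.erase q).image bDown := by
    ext x
    simp only [Finset.mem_erase, Finset.mem_image]
    constructor
    · rintro ⟨hxne, q2, hq2, rfl⟩
      have : q2 ≠ q := fun h' => hxne (by rw [h'])
      exact ⟨q2, ⟨this, hq2⟩, rfl⟩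
    · rintro ⟨q2, ⟨hq2ne, hq2π⟩, rfl⟩
      exact ⟨fun heq => hq2ne (hinj (Finset.mem_coe.2 hq2π) (Finset.mem_coe.2 hq) heq),
        q2, hq2π, rfl⟩
  have h2 : Set.EqOn (bUp ∘ bDown (N := N)) id ↑(π'.erase q) := by
    intro x hx
    obtain ⟨hq2ne, hq2π⟩ := Finset.mem_erase.1 (Finset.mem_coe.1 hx)
    exact bUp_bDown (hnlast x hq2π hq2ne)
  rw [insInto, hpair, herase, Finset.image_image, Finset.image_congr h2, Finset.image_id,
    Finset.insert_erase hq]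

lemma last_mem_unique {k r : ℕ} {π' : Finset (Finset (Fin (N + 1)) × Bool)}
    (h : IsBSP (N + 1) k r π') : ∃! q, q ∈ π' ∧ Fin.last N ∈ q.1 := by
  obtain ⟨hcard, hne, hdis, hcov, hcol, huniq⟩ := h
  obtain ⟨qb, hqb, hlqb⟩ := hcov (Fin.last N)
  refine ⟨qb, ⟨hqb, hlqb⟩, ?_⟩
  rintro q ⟨hq, hlq⟩
  by_contra hne'
  exact (Finset.disjoint_left.1 (hdis q hq qb hqb hne') hlq) hlqb

lemma new_not_mem_insInto {k r : ℕ} {π : Finset (Finset (Fin N) × Bool)}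
    (h : IsBSP N k r π) {p} (hp : p ∈ π) :
    ({Fin.last N}, false) ∉ insInto π p := by
  intro hmem
  rcases mem_insInto.1 hmem with heq | ⟨q, hq, heq⟩
  · obtain ⟨y, hy⟩ := h.2.1 p hp
    have h1 : ({Fin.last N} : Finset (Fin (N + 1))) = insert (Fin.last N) (p.1.map (ecs N)) :=
      congrArg Prod.fst heq
    have : y.castSucc ∈ ({Fin.last N} : Finset (Fin (N + 1))) := by
      rw [h1]
      exact Finset.mem_insert_of_mem (mem_map_ecs.2 ⟨y, hy, rfl⟩)
    exact (Fin.castSucc_lt_last y).ne (Finset.mem_singleton.1 this)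
  · apply last_not_mem_map q.1
    have h1 : q.1.map (ecs N) = ({Fin.last N} : Finset (Fin (N + 1))) := congrArg Prod.fst heq
    rw [h1]
    exact Finset.mem_singleton_self _

-- factor function
section Prod
variable {A : Type*} [Ring A] (a b : ℕ → A)

noncomputable def fct (π : Finset (Finset (Fin N) × Bool)) (i : Fin N) : A :=
  if h : ∃ p ∈ π, i ∈ p.1 ∧ ∀ j ∈ p.1, i ≤ j then
    (if h.choose.2 then a h.choose.1.card else b h.choose.1.card)
  else 1

lemma obp_eq (π : Finset (Finset (Fin N) × Bool)) :
    orderedBlockProd a b π = (List.ofFn (fct a b π)).prod := by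
  rw [orderedBlockProd, List.ofFn_eq_map]
  rfl

lemma fct_min {π : Finset (Finset (Fin N) × Bool)}
    (hdis : ∀ p ∈ π, ∀ q ∈ π, p ≠ q → Disjoint p.1 q.1)
    {p} (hp : p ∈ π) {i} (hi : i ∈ p.1) (hmin : ∀ j ∈ p.1, i ≤ j) :
    fct a b π i = if p.2 then a p.1.card else b p.1.card := by
  have h : ∃ p ∈ π, i ∈ p.1 ∧ ∀ j ∈ p.1, i ≤ j := ⟨p, hp, hi, hmin⟩
  rw [fct, dif_pos h]
  obtain ⟨hq, hiq, -⟩ := h.choose_spec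
  have heq : h.choose = p := by
    by_contra hne
    exact (Finset.disjoint_left.1 (hdis _ hq _ hp hne) hiq) hi
  rw [heq]

lemma fct_not_min {π : Finset (Finset (Fin N) × Bool)} {i : Fin N}
    (h : ¬ ∃ p ∈ π, i ∈ p.1 ∧ ∀ j ∈ p.1, i ≤ j) : fct a b π i = 1 := dif_neg h

lemma leibniz_ofFn (D : A → A) (hD : ∀ x y, D (x * y) = D x * y + x * D y)
    (hD1 : D (1 : A) = 0) :
    ∀ {M : ℕ} (f : Fin M → A),
      D ((List.ofFn f).prod)
        = ∑ x : Fin M, (List.ofFn fun y => if y = x then D (f y) else f y).prod := by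
  intro M
  induction M with
  | zero =>
    intro f
    simp [hD1]
  | succ M ih =>
    intro f
    rw [List.ofFn_succ, List.prod_cons, hD, Fin.sum_univ_succ]
    congr 1
    · conv_rhs => rw [List.ofFn_succ]
      rw [List.prod_cons, if_pos rfl]
      exact congrArg (fun t => D (f 0) * t) (congrArg List.prod (congrArg List.ofFn
        (funext fun i => (if_neg (Fin.succ_ne_zero i)).symm)))
    · rw [ih (fun i => f i.succ), Finset.mul_sum]
      apply Finset.sum_congr rfl
      intro z _
      conv_rhs => rw [List.ofFn_succ]
      rw [List.prod_cons, if_neg (fun h => Fin.succ_ne_zero z h.symm)]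
      exact congrArg (fun t => f 0 * t) (congrArg List.prod (congrArg List.ofFn
        (funext fun y => by simp only [Fin.succ_inj])))

lemma prod_insNew {k r : ℕ} {π : Finset (Finset (Fin N) × Bool)}
    (h : IsBSP N k r π) (hrN : r ≤ N) :
    (List.ofFn (fct a b (insNew π))).prod = (List.ofFn (fct a b π)).prod * b 1 := by
  have h' := isBSP_insNew h hrN
  obtain ⟨hcard', hne', hdis', hcov', hcol', huniq'⟩ := h'
  obtain ⟨hcard, hne, hdis, hcov, hcol, huniq⟩ := h
  rw [List.ofFn_succ' (fct a b (insNew π)), List.prod_concat]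
  congr 1
  · congr 1
    congr 1
    funext i
    by_cases hm : ∃ p ∈ π, i ∈ p.1 ∧ ∀ j ∈ p.1, i ≤ j
    · obtain ⟨p, hp, hip, hmin⟩ := hm
      rw [fct_min a b hdis hp hip hmin]
      have hup : bUp p ∈ insNew π := Finset.mem_insert_of_mem (Finset.mem_image_of_mem _ hp)
      have hiup : i.castSucc ∈ (bUp p).1 := mem_map_ecs.2 ⟨i, hip, rfl⟩
      have hminup : ∀ j ∈ (bUp p).1, i.castSucc ≤ j := by
        intro j hj
        obtain ⟨y, hy, rfl⟩ := mem_map_ecs.1 hj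
        exact Fin.castSucc_le_castSucc_iff.2 (hmin y hy)
      rw [fct_min a b hdis' hup hiup hminup]
      simp [bUp]
    · have hm' : ¬ ∃ p' ∈ insNew π, i.castSucc ∈ p'.1 ∧ ∀ j ∈ p'.1, i.castSucc ≤ j := by
        rintro ⟨q', hq', hmem, hmin⟩
        rcases mem_insNew.1 hq' with rfl | ⟨q, hq, rfl⟩
        · exact (Fin.castSucc_lt_last i).ne (Finset.mem_singleton.1 hmem)
        · obtain ⟨y, hy, hyeq⟩ := mem_map_ecs.1 hmem
          have hyi : y = i := Fin.castSucc_injective N hyeq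
          subst hyi
          apply hm
          refine ⟨q, hq, hy, fun j hj => ?_⟩
          exact Fin.castSucc_le_castSucc_iff.1 (hmin j.castSucc (mem_map_ecs.2 ⟨j, hj, rfl⟩))
      rw [fct_not_min a b hm, fct_not_min a b hm']
  · have hnew : ({Fin.last N}, false) ∈ insNew π := Finset.mem_insert_self _ _
    have hmins : ∀ j ∈ (({Fin.last N}, false) : Finset (Fin (N + 1)) × Bool).1,
        Fin.last N ≤ j := by
      intro j hj
      exact le_of_eq (Finset.mem_singleton.1 hj).symm
    rw [fct_min a b hdis' hnew (Finset.mem_singleton_self _) hmins]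
    simp

lemma prod_insInto (D : A → A) (hD : ∀ x y, D (x * y) = D x * y + x * D y)
    (ha : ∀ i : ℕ, 1 ≤ i → D (a i) = a (i + 1)) (hb : ∀ i : ℕ, 1 ≤ i → D (b i) = b (i + 1))
    {k r : ℕ} {π : Finset (Finset (Fin N) × Bool)}
    (h : IsBSP N k r π) (hrN : r ≤ N) {p} (hp : p ∈ π) :
    (List.ofFn (fct a b (insInto π p))).prod
      = (List.ofFn fun y =>
          if y = p.1.min' (h.2.1 p hp) then D (fct a b π y) else fct a b π y).prod := by
  obtain ⟨hcard', hne', hdis', hcov', hcol', huniq'⟩ := isBSP_insInto h hrN hp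
  obtain ⟨hcard, hne, hdis, hcov, hcol, huniq⟩ := h
  have hq'mem : (insert (Fin.last N) (p.1.map (ecs N)), p.2) ∈ insInto π p :=
    Finset.mem_insert_self _ _
  rw [List.ofFn_succ' (fct a b (insInto π p)), List.prod_concat]
  have hlast1 : fct a b (insInto π p) (Fin.last N) = 1 := by
    apply fct_not_min
    rintro ⟨q', hq', hmem, hmin⟩
    obtain ⟨y0, hy0⟩ := hne p hp
    rcases mem_insInto.1 hq' with rfl | ⟨q, hq, rfl⟩
    · have := hmin y0.castSucc (Finset.mem_insert_of_mem (mem_map_ecs.2 ⟨y0, hy0, rfl⟩))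
      exact absurd this (Fin.castSucc_lt_last y0).not_ge
    · exact last_not_mem_map q.1 hmem
  rw [hlast1, mul_one]
  congr 1
  congr 1
  funext i
  by_cases him : i = p.1.min' (hne p hp)
  · rw [him, if_pos rfl]
    set m := p.1.min' (hne p hp) with hmdef
    have hq'1 : m.castSucc ∈ (insert (Fin.last N) (p.1.map (ecs N))) :=
      Finset.mem_insert_of_mem (mem_map_ecs.2 ⟨m, Finset.min'_mem _ _, rfl⟩)
    have hminq' : ∀ j ∈ (insert (Fin.last N) (p.1.map (ecs N))), m.castSucc ≤ j := by
      intro j hj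
      rcases Finset.mem_insert.1 hj with rfl | hj2
      · exact (Fin.castSucc_lt_last m).le
      · obtain ⟨y, hy, rfl⟩ := mem_map_ecs.1 hj2
        exact Fin.castSucc_le_castSucc_iff.2 (Finset.min'_le _ y hy)
    rw [fct_min a b hdis' hq'mem hq'1 hminq']
    rw [fct_min a b hdis hp (Finset.min'_mem _ _) (fun j hj => Finset.min'_le _ j hj)]
    have hcardq : (insert (Fin.last N) (p.1.map (ecs N))).card = p.1.card + 1 := by
      rw [Finset.card_insert_of_notMem (last_not_mem_map p.1), Finset.card_map]
    have h1 : 1 ≤ p.1.card := Finset.card_pos.2 (hne p hp)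
    rw [hcardq, apply_ite D, ha _ h1, hb _ h1]
  · rw [if_neg him]
    by_cases hm2 : ∃ q ∈ π, i ∈ q.1 ∧ ∀ j ∈ q.1, i ≤ j
    · obtain ⟨q, hq, hiq, hminq⟩ := hm2
      have hqp : q ≠ p := by
        rintro rfl
        exact him (le_antisymm (hminq _ (Finset.min'_mem _ _)) (Finset.min'_le _ _ hiq))
      rw [fct_min a b hdis hq hiq hminq]
      have hqmem : bUp q ∈ insInto π p :=
        Finset.mem_insert_of_mem (Finset.mem_image_of_mem _ (Finset.mem_erase.2 ⟨hqp, hq⟩))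
      have h1 : i.castSucc ∈ (bUp q).1 := mem_map_ecs.2 ⟨i, hiq, rfl⟩
      have h2 : ∀ j ∈ (bUp q).1, i.castSucc ≤ j := by
        intro j hj
        obtain ⟨y, hy, rfl⟩ := mem_map_ecs.1 hj
        exact Fin.castSucc_le_castSucc_iff.2 (hminq y hy)
      rw [fct_min a b hdis' hqmem h1 h2]
      simp [bUp]
    · have hm3 : ¬ ∃ q' ∈ insInto π p, i.castSucc ∈ q'.1 ∧ ∀ j ∈ q'.1, i.castSucc ≤ j := by
        rintro ⟨q', hq', hmem, hmin⟩
        rcases mem_insInto.1 hq' with rfl | ⟨q, hq, rfl⟩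
        · have hi2 : i ∈ p.1 := by
            rcases Finset.mem_insert.1 hmem with heq | h2
            · exact absurd heq (Fin.castSucc_lt_last i).ne
            · obtain ⟨y, hy, hyeq⟩ := mem_map_ecs.1 h2
              rwa [← Fin.castSucc_injective N hyeq]
          apply hm2
          refine ⟨p, hp, hi2, fun j hj => ?_⟩
          exact Fin.castSucc_le_castSucc_iff.1
            (hmin j.castSucc (Finset.mem_insert_of_mem (mem_map_ecs.2 ⟨j, hj, rfl⟩)))
        · obtain ⟨y, hy, hyeq⟩ := mem_map_ecs.1 hmem
          have hyi : y = i := Fin.castSucc_injective N hyeq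
          subst hyi
          apply hm2
          refine ⟨q, (Finset.mem_erase.1 hq).2, hy, fun j hj => ?_⟩
          exact Fin.castSucc_le_castSucc_iff.1 (hmin j.castSucc (mem_map_ecs.2 ⟨j, hj, rfl⟩))
      rw [fct_not_min a b hm2, fct_not_min a b hm3]

lemma derivD (D : A → A) (hD : ∀ x y, D (x * y) = D x * y + x * D y)
    (hD1 : D (1 : A) = 0) (hadd : ∀ x y, D (x + y) = D x + D y)
    (ha : ∀ i : ℕ, 1 ≤ i → D (a i) = a (i + 1)) (hb : ∀ i : ℕ, 1 ≤ i → D (b i) = b (i + 1))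
    {k r : ℕ} {π : Finset (Finset (Fin N) × Bool)}
    (h : IsBSP N k r π) (hrN : r ≤ N) :
    D ((List.ofFn (fct a b π)).prod)
      = ∑ p ∈ π, (List.ofFn (fct a b (insInto π p))).prod := by
  classical
  rw [leibniz_ofFn D hD hD1 (fct a b π)]
  have hvan : ∀ x ∈ (univ : Finset (Fin N)),
      (List.ofFn fun y => if y = x then D (fct a b π y) else fct a b π y).prod ≠ 0 →
      (∃ q ∈ π, x ∈ q.1 ∧ ∀ j ∈ q.1, x ≤ j) := by
    intro x _ hne0
    by_contra hno
    apply hne0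
    refine List.prod_eq_zero ((List.mem_ofFn.2 ⟨x, ?_⟩))
    show (if x = x then D (fct a b π x) else fct a b π x) = 0
    rw [if_pos rfl, fct_not_min a b hno, hD1]
  rw [← Finset.sum_filter_of_ne hvan]
  refine (Finset.sum_bij (fun p hp => p.1.min' (h.2.1 p hp)) ?_ ?_ ?_ ?_).symm
  · intro p hp
    exact Finset.mem_filter.2 ⟨Finset.mem_univ _,
      ⟨p, hp, Finset.min'_mem _ _, fun j hj => Finset.min'_le _ j hj⟩⟩
  · intro p1 hp1 p2 hp2 heq
    by_contra hne'
    have hd := h.2.2.1 p1 hp1 p2 hp2 hne'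
    have heq' : p1.1.min' (h.2.1 p1 hp1) = p2.1.min' (h.2.1 p2 hp2) := heq
    apply Finset.disjoint_left.1 hd (Finset.min'_mem _ (h.2.1 p1 hp1))
    rw [heq']
    exact Finset.min'_mem _ (h.2.1 p2 hp2)
  · intro x hx
    obtain ⟨-, q, hq, hxq, hminx⟩ := Finset.mem_filter.1 hx
    exact ⟨q, hq, le_antisymm (Finset.min'_le _ _ hxq) (hminx _ (Finset.min'_mem _ _))⟩
  · intro p hp
    exact prod_insInto a b D hD ha hb h hrN hp


lemma choose_insInto {k r : ℕ} {π : Finset (Finset (Fin N) × Bool)}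
    (hbsp : IsBSP N k r π) {p} (hp : p ∈ π)
    (H : ∃! q, q ∈ insInto π p ∧ Fin.last N ∈ q.1) :
    Finset.choose (fun q => Fin.last N ∈ q.1) (insInto π p) H
      = (insert (Fin.last N) (p.1.map (ecs N)), p.2) := by
  have h1 := Finset.choose_mem (fun q => Fin.last N ∈ q.1) (insInto π p) H
  have h2 := Finset.choose_property (fun q => Fin.last N ∈ q.1) (insInto π p) H
  rcases mem_insInto.1 h1 with heq | ⟨q, hq, heq⟩
  · exact heq
  · exfalso
    rw [← heq] at h2
    exact last_not_mem_map q.1 h2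

-- part A / part B sum identities
lemma partA0 {r : ℕ} (hrN : r ≤ N) :
    ((univ : Finset (Finset (Finset (Fin (N + 1)) × Bool))).filter (IsBSP (N + 1) 0 r)).filter
      (fun π' => ({Fin.last N}, false) ∈ π') = ∅ := by
  rw [Finset.eq_empty_iff_forall_notMem]
  intro π' hπ'
  obtain ⟨h1, h2⟩ := Finset.mem_filter.1 hπ'
  have hb := (Finset.mem_filter.1 h1).2
  have hc := card_false hb (hrN.trans (Nat.le_succ N))
  have hmem : ({Fin.last N}, false) ∈ π'.filter (fun p => p.2 = false) :=
    Finset.mem_filter.2 ⟨h2, rfl⟩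
  have := Finset.card_pos.2 ⟨_, hmem⟩
  omega

lemma partA {r : ℕ} (hrN : r ≤ N) (k : ℕ) :
    ∑ π' ∈ ((univ : Finset (Finset (Finset (Fin (N + 1)) × Bool))).filter
        (IsBSP (N + 1) (k + 1) r)).filter (fun π' => ({Fin.last N}, false) ∈ π'),
      orderedBlockProd a b π'
    = (∑ π ∈ (univ : Finset (Finset (Finset (Fin N) × Bool))).filter (IsBSP N k r),
        orderedBlockProd a b π) * b 1 := by
  rw [Finset.sum_mul]
  refine Finset.sum_bij' (fun π' _ => remNew π') (fun π _ => insNew π) ?_ ?_ ?_ ?_ ?_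
  · intro π' h
    have hb := (Finset.mem_filter.1 (Finset.mem_filter.1 h).1).2
    have hl := (Finset.mem_filter.1 h).2
    exact Finset.mem_filter.2 ⟨Finset.mem_univ _, isBSP_remNew hb hrN hl⟩
  · intro π h
    have hb := (Finset.mem_filter.1 h).2
    exact Finset.mem_filter.2 ⟨Finset.mem_filter.2 ⟨Finset.mem_univ _, isBSP_insNew hb hrN⟩,
      Finset.mem_insert_self _ _⟩
  · intro π' h
    have hb := (Finset.mem_filter.1 (Finset.mem_filter.1 h).1).2
    have hl := (Finset.mem_filter.1 h).2
    exact insNew_remNew hb hl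
  · intro π h
    exact remNew_insNew (Finset.mem_filter.1 h).2
  · intro π' h
    have hb := (Finset.mem_filter.1 (Finset.mem_filter.1 h).1).2
    have hl := (Finset.mem_filter.1 h).2
    have hrem := isBSP_remNew hb hrN hl
    have key := prod_insNew a b hrem hrN
    rw [insNew_remNew hb hl] at key
    rw [obp_eq a b π', obp_eq a b (remNew π'), key]

lemma partB (D : A → A) (hD : ∀ x y, D (x * y) = D x * y + x * D y)
    (hD1 : D (1 : A) = 0) (hadd : ∀ x y, D (x + y) = D x + D y)
    (ha : ∀ i : ℕ, 1 ≤ i → D (a i) = a (i + 1)) (hb : ∀ i : ℕ, 1 ≤ i → D (b i) = b (i + 1))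
    {r : ℕ} (hrN : r ≤ N) (k : ℕ) :
    ∑ π' ∈ ((univ : Finset (Finset (Finset (Fin (N + 1)) × Bool))).filter
        (IsBSP (N + 1) k r)).filter (fun π' => ({Fin.last N}, false) ∉ π'),
      orderedBlockProd a b π'
    = D (∑ π ∈ (univ : Finset (Finset (Finset (Fin N) × Bool))).filter (IsBSP N k r),
        orderedBlockProd a b π) := by
  classical
  have hDsum : D (∑ π ∈ (univ : Finset (Finset (Finset (Fin N) × Bool))).filter (IsBSP N k r),
      orderedBlockProd a b π)
      = ∑ π ∈ (univ : Finset (Finset (Finset (Fin N) × Bool))).filter (IsBSP N k r),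
        D (orderedBlockProd a b π) :=
    map_sum (AddMonoidHom.mk' D hadd) _ _
  rw [hDsum]
  have step : ∀ π ∈ (univ : Finset (Finset (Finset (Fin N) × Bool))).filter (IsBSP N k r),
      D (orderedBlockProd a b π) = ∑ p ∈ π, orderedBlockProd a b (insInto π p) := by
    intro π hπ
    have hbsp := (Finset.mem_filter.1 hπ).2
    rw [obp_eq a b π, derivD a b D hD hD1 hadd ha hb hbsp hrN]
    exact Finset.sum_congr rfl (fun p _ => (obp_eq a b _).symm)
  rw [Finset.sum_congr rfl step, Finset.sum_sigma']
  refine (Finset.sum_bij'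
    (fun (x : Σ _ : Finset (Finset (Fin N) × Bool), Finset (Fin N) × Bool) _ =>
      insInto x.1 x.2)
    (fun π' h => ⟨π'.image bDown, bDown (Finset.choose (fun q => Fin.last N ∈ q.1) π'
      (last_mem_unique (Finset.mem_filter.1 (Finset.mem_filter.1 h).1).2))⟩)
    ?_ ?_ ?_ ?_ ?_).symm
  · intro x hx
    obtain ⟨hπ, hp⟩ := Finset.mem_sigma.1 hx
    have hb := (Finset.mem_filter.1 hπ).2
    exact Finset.mem_filter.2 ⟨Finset.mem_filter.2 ⟨Finset.mem_univ _, isBSP_insInto hb hrN hp⟩,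
      new_not_mem_insInto hb hp⟩
  · intro π' h
    have hb := (Finset.mem_filter.1 (Finset.mem_filter.1 h).1).2
    have hnot := (Finset.mem_filter.1 h).2
    refine Finset.mem_sigma.2 ⟨Finset.mem_filter.2 ⟨Finset.mem_univ _,
      isBSP_imgDown hb hrN hnot⟩, ?_⟩
    exact Finset.mem_image_of_mem _ (Finset.choose_mem _ _ _)
  · intro x hx
    obtain ⟨π₁, p₁⟩ := x
    obtain ⟨hπ, hp⟩ := Finset.mem_sigma.1 hx
    have hbsp := (Finset.mem_filter.1 hπ).2
    have h1 : (insInto π₁ p₁).image bDown = π₁ := imgDown_insInto hbsp hp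
    have h2 : bDown (insert (Fin.last N) (p₁.1.map (ecs N)), p₁.2) = p₁ := by
      rw [bDown]
      simp only [fdown_insert_last, fdown_map]
    show (⟨(insInto π₁ p₁).image bDown, bDown (Finset.choose (fun q => Fin.last N ∈ q.1)
      (insInto π₁ p₁) _)⟩ : Σ _ : Finset (Finset (Fin N) × Bool), Finset (Fin N) × Bool)
      = ⟨π₁, p₁⟩
    rw [h1, choose_insInto hbsp hp, h2]
  · intro π' h
    have hb := (Finset.mem_filter.1 (Finset.mem_filter.1 h).1).2
    have hnot := (Finset.mem_filter.1 h).2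
    exact insInto_imgDown hb hrN hnot
      (Finset.choose_mem (fun q => Fin.last N ∈ q.1) π' _)
      (Finset.choose_property (fun q => Fin.last N ∈ q.1) π' _)
  · intro x hx
    rfl

lemma base_empty {r k : ℕ} (hk : 0 < k) :
    ((univ : Finset (Finset (Finset (Fin r) × Bool))).filter (IsBSP r k r)) = ∅ := by
  rw [Finset.eq_empty_iff_forall_notMem]
  intro π hπ
  have hb := (Finset.mem_filter.1 hπ).2
  have h1 := card_true hb (le_refl r)
  have halltrue : π.filter (fun p => p.2 = true) = π := by
    rw [Finset.filter_eq_self]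
    intro p hp
    obtain ⟨i, hi⟩ := hb.2.1 p hp
    exact (hb.2.2.2.2.1 p hp).2 ⟨i, hi, i.isLt⟩
  rw [halltrue] at h1
  have := hb.1
  omega

lemma base0 (r : ℕ) :
    ∑ π ∈ (univ : Finset (Finset (Finset (Fin r) × Bool))).filter (IsBSP r 0 r),
      orderedBlockProd a b π = (a 1) ^ r := by
  classical
  set π₀ : Finset (Finset (Fin r) × Bool) :=
    Finset.univ.image (fun i : Fin r => (({i} : Finset (Fin r)), true)) with hπ₀
  have hinj : Function.Injective (fun i : Fin r => (({i} : Finset (Fin r)), true)) := by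
    intro i j hij
    exact Finset.singleton_injective (congrArg Prod.fst hij)
  have hmem₀ : ∀ q ∈ π₀, ∃ i : Fin r, q = ({i}, true) := by
    intro q hq
    obtain ⟨i, -, rfl⟩ := Finset.mem_image.1 hq
    exact ⟨i, rfl⟩
  have hbsp₀ : IsBSP r 0 r π₀ := by
    refine ⟨?_, ?_, ?_, ?_, ?_, ?_⟩
    · rw [hπ₀, Finset.card_image_of_injective _ hinj, Finset.card_univ, Fintype.card_fin]
      omega
    · intro p hp
      obtain ⟨i, rfl⟩ := hmem₀ p hp
      exact ⟨i, Finset.mem_singleton_self i⟩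
    · intro p hp q hq hpq
      obtain ⟨i, rfl⟩ := hmem₀ p hp
      obtain ⟨j, rfl⟩ := hmem₀ q hq
      have : i ≠ j := fun h => hpq (by rw [h])
      exact Finset.disjoint_singleton.2 this
    · intro x
      exact ⟨({x}, true), Finset.mem_image_of_mem _ (Finset.mem_univ x),
        Finset.mem_singleton_self x⟩
    · intro p hp
      obtain ⟨i, rfl⟩ := hmem₀ p hp
      simp only [true_iff]
      exact ⟨i, Finset.mem_singleton_self i, i.isLt⟩
    · intro p hp i hi j hj hir hjr
      obtain ⟨x, rfl⟩ := hmem₀ p hp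
      rw [Finset.mem_singleton.1 hi, Finset.mem_singleton.1 hj]
  have hsingle : (univ : Finset (Finset (Finset (Fin r) × Bool))).filter (IsBSP r 0 r)
      = {π₀} := by
    ext π
    simp only [Finset.mem_filter, Finset.mem_univ, true_and, Finset.mem_singleton]
    constructor
    · intro hbsp
      have hblock : ∀ q ∈ π, ∃ i : Fin r, q = ({i}, true) ∧ i ∈ q.1 := by
        intro q hq
        obtain ⟨i, hi⟩ := hbsp.2.1 q hq
        have hqi : q.1 = {i} := by
          apply Finset.eq_singleton_iff_unique_mem.2
          exact ⟨hi, fun x hx => hbsp.2.2.2.2.2 q hq x hx i hi x.isLt i.isLt⟩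
        have hq2 : q.2 = true := (hbsp.2.2.2.2.1 q hq).2 ⟨i, hi, i.isLt⟩
        exact ⟨i, (Prod.ext_iff.2 ⟨hqi, hq2⟩ : q = ({i}, true)), hi⟩
      ext q
      constructor
      · intro hq
        obtain ⟨i, rfl, -⟩ := hblock q hq
        exact Finset.mem_image_of_mem _ (Finset.mem_univ i)
      · intro hq
        obtain ⟨i, rfl⟩ := hmem₀ q hq
        obtain ⟨q2, hq2, hiq2⟩ := hbsp.2.2.2.1 i
        obtain ⟨j, rfl, hj⟩ := hblock q2 hq2
        have : i = j := Finset.mem_singleton.1 hiq2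
        rw [this]
        exact hq2
    · rintro rfl
      exact hbsp₀
  rw [hsingle, Finset.sum_singleton, obp_eq]
  have hf : fct a b π₀ = fun _ : Fin r => a 1 := by
    funext i
    have hp : (({i} : Finset (Fin r)), true) ∈ π₀ := Finset.mem_image_of_mem _ (Finset.mem_univ i)
    have hd : ∀ p ∈ π₀, ∀ q ∈ π₀, p ≠ q → Disjoint p.1 q.1 := hbsp₀.2.2.1
    have := fct_min a b hd hp (Finset.mem_singleton_self i)
      (fun j hj => le_of_eq (Finset.mem_singleton.1 hj).symm)
    rw [this]
    simp
  rw [hf, List.ofFn_const, List.prod_replicate]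

end Prod

-- polynomial lemmas
section Poly
variable {A : Type*} [Ring A]

lemma coeff_polyLift (D : A → A) (h0 : D 0 = 0) (p : Polynomial A) (k : ℕ) :
    (polyLift D p).coeff k = D (p.coeff k) := by
  classical
  rw [polyLift, Polynomial.sum, Polynomial.finset_sum_coeff]
  simp only [Polynomial.coeff_C_mul, Polynomial.coeff_X_pow, mul_ite, mul_one, mul_zero]
  simp only [eq_comm (a := k)]
  rw [Finset.sum_ite_eq' p.support k (fun i => D (p.coeff i))]
  by_cases hk : k ∈ p.support
  · rw [if_pos hk]
  · rw [if_neg hk, Polynomial.notMem_support_iff.1 hk, h0]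

lemma coeff_EOpNC_zero (D : A → A) (h0 : D 0 = 0) (b1 : A) (p : Polynomial A) :
    (EOpNC D b1 p).coeff 0 = D (p.coeff 0) := by
  rw [EOpNC, Polynomial.coeff_add, coeff_polyLift D h0, ← mul_assoc,
    Polynomial.coeff_mul_X_zero, zero_add]

lemma coeff_EOpNC_succ (D : A → A) (h0 : D 0 = 0) (b1 : A) (p : Polynomial A) (k : ℕ) :
    (EOpNC D b1 p).coeff (k + 1) = p.coeff k * b1 + D (p.coeff (k + 1)) := by
  rw [EOpNC, Polynomial.coeff_add, coeff_polyLift D h0, ← mul_assoc,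
    Polynomial.coeff_mul_X, Polynomial.coeff_mul_C]

end Poly

end S3

/-- For `n ≥ k ≥ 0` and `r ≥ 0`, the noncommutative partial `r`-Bell
polynomial `B^r_{n+r,k+r} ∈ A` is the sum, over all bicolored set partitions
`π ∈ S^r_{n+r,k+r}`, of the ordered product `x_{|B_1|} x_{|B_2|} ⋯ x_{|B_{k+r}|}`, the
blocks being listed in increasing order of their minimal elements, where `x_{|B_i|}` is
`a_{|B_i|}` if `B_i` is colored 1, and `b_{|B_i|}` if `B_i` is colored 2. -/
theorem stmt3 {A : Type*} [Ring A] [Algebra ℚ A] (D : A →ₗ[ℚ] A)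
    (hD : ∀ x y : A, D (x * y) = D x * y + x * D y)
    (a b : ℕ → A) (ha : ∀ i : ℕ, 1 ≤ i → D (a i) = a (i + 1))
    (hb : ∀ i : ℕ, 1 ≤ i → D (b i) = b (i + 1))
    (n k r : ℕ) (hkn : k ≤ n) :
    rBellNC (⇑D) (a 1) (b 1) n k r =
      ∑ π ∈ Finset.univ.filter
          (fun π : Finset (Finset (Fin (n + r)) × Bool) => IsBSP (n + r) k r π),
        orderedBlockProd a b π := by
  classical
  have h0 : (⇑D) (0 : A) = 0 := map_zero D
  have hadd : ∀ x y : A, (⇑D) (x + y) = (⇑D) x + (⇑D) y := fun x y => map_add D x y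
  have hD1 : (⇑D) (1 : A) = 0 := by
    have h := hD 1 1
    simp only [mul_one, one_mul] at h
    exact (left_eq_add.1 h)
  suffices H : ∀ m j, ((EOpNC (⇑D) (b 1))^[m] (Polynomial.C ((a 1) ^ r))).coeff j
      = ∑ π ∈ Finset.univ.filter
          (fun π : Finset (Finset (Fin (m + r)) × Bool) => IsBSP (m + r) j r π),
        orderedBlockProd a b π by
    exact H n k
  intro m
  induction m with
  | zero =>
    intro j
    simp only [Function.iterate_zero, id_eq]
    rw [Polynomial.coeff_C]
    have e : 0 + r = r := by omega
    rw [e]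
    cases j with
    | zero =>
      rw [if_pos rfl, ← S3.base0 a b r]
    | succ j =>
      rw [if_neg (by omega), S3.base_empty (Nat.succ_pos j), Finset.sum_empty]
  | succ m ih =>
    intro j
    rw [Function.iterate_succ_apply']
    have hrN : r ≤ m + r := Nat.le_add_left r m
    have e : m + 1 + r = (m + r) + 1 := by omega
    rw [e]
    cases j with
    | zero =>
      rw [S3.coeff_EOpNC_zero (⇑D) h0, ih 0]
      rw [← Finset.sum_filter_add_sum_filter_not
        ((Finset.univ.filter
          (fun π : Finset (Finset (Fin ((m + r) + 1)) × Bool) => IsBSP ((m + r) + 1) 0 r π)))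
        (fun π' => ({Fin.last (m + r)}, false) ∈ π')]
      rw [S3.partA0 hrN, Finset.sum_empty, zero_add,
        S3.partB a b (⇑D) hD hD1 hadd ha hb hrN 0]
    | succ j =>
      rw [S3.coeff_EOpNC_succ (⇑D) h0, ih j, ih (j + 1)]
      rw [← Finset.sum_filter_add_sum_filter_not
        ((Finset.univ.filter
          (fun π : Finset (Finset (Fin ((m + r) + 1)) × Bool) => IsBSP ((m + r) + 1) (j + 1) r π)))
        (fun π' => ({Fin.last (m + r)}, false) ∈ π')]
      rw [S3.partA a b hrN j, S3.partB a b (⇑D) hD hD1 hadd ha hb hrN (j + 1)]
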